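/- Let H be an n×n real symmetric matrix with eigenvalues λ_1 ≤ ⋯ ≤ λ_n (counted with multiplicity) and corresponding orthonormal eigenvectors φ_1, …, φ_n, and let 1 ≤ N < n. Then for every P ∈ C_N, writing s_j = φ_jᵀ P φ_j, one has tr(HP) − Σ_{j=1}^N λ_j ≥ (λ_{N+1} − λ_N) · Σ_{j=1}^N (1 − s_j). -/

import Mathlib

open Matrix BigOperators

/-- The convex set of admissible density matrices: symmetric, trace `N`,
with both `P` and `1 - P` positive semidefinite. -/
def CN (n N : ℕ) : Set (Matrix (Fin n) (Fin n) ℝ) :=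
  {P | P.IsSymm ∧ P.trace = (N : ℝ) ∧ P.PosSemidef ∧
    ((1 : Matrix (Fin n) (Fin n) ℝ) - P).PosSemidef}

/-- For every `P ∈ C_N`, writing `s_j = φ_jᵀ P φ_j`, one has
`tr(HP) − ∑_{j=1}^N λ_j ≥ (λ_{N+1} − λ_N) ∑_{j=1}^N (1 − s_j)`. -/
theorem stmt4 {n N : ℕ} (hN1 : 1 ≤ N) (hNn : N < n)
    (H : Matrix (Fin n) (Fin n) ℝ) (hH : H.IsSymm)
    (lam : Fin n → ℝ) (hmono : Monotone lam)
    (φ : Fin n → Fin n → ℝ)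
    (horth : ∀ i j, φ i ⬝ᵥ φ j = if i = j then (1 : ℝ) else 0)
    (heig : ∀ i, H.mulVec (φ i) = lam i • φ i)
    (P : Matrix (Fin n) (Fin n) ℝ) (hP : P ∈ CN n N)
    (s : Fin n → ℝ) (hs : ∀ j, s j = φ j ⬝ᵥ P.mulVec (φ j)) :
    (H * P).trace - (∑ j ∈ Finset.univ.filter (fun j : Fin n => (j : ℕ) < N), lam j) ≥
      (lam ⟨N, hNn⟩ - lam ⟨N - 1, by omega⟩) *
        ∑ j ∈ Finset.univ.filter (fun j : Fin n => (j : ℕ) < N), (1 - s j) := by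
  obtain ⟨hPsymm, hPtr, hPpsd, hIPpsd⟩ := hP
  set U : Matrix (Fin n) (Fin n) ℝ := Matrix.of φ with hUdef
  -- orthogonality of U
  have hUUt : U * Uᵀ = 1 := by
    ext i j
    simpa [Matrix.mul_apply, Matrix.one_apply, dotProduct, hUdef] using horth i j
  have hUtU : Uᵀ * U = 1 := mul_eq_one_comm.mp hUUt
  -- s j as diagonal of U P Uᵀ
  have hsd : ∀ j, (U * P * Uᵀ) j j = s j := by
    intro j
    rw [hs j]
    simp only [Matrix.mul_apply, Matrix.transpose_apply, dotProduct, mulVec,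
      Finset.sum_mul, Finset.mul_sum]
    rw [Finset.sum_comm]
    refine Finset.sum_congr rfl fun l _ => Finset.sum_congr rfl fun k _ => ?_
    simp only [hUdef, Matrix.of_apply]
    ring
  -- sum of s = N
  have hsum : ∑ j, s j = (N : ℝ) := by
    have h1 : ∑ j, s j = (U * P * Uᵀ).trace := by
      simp only [Matrix.trace, Matrix.diag]
      exact (Finset.sum_congr rfl fun j _ => (hsd j).symm)
    rw [h1, Matrix.trace_mul_cycle, hUtU, Matrix.one_mul, hPtr]
  -- U H = diagonal lam * U
  have hUH : U * H = Matrix.diagonal lam * U := by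
    ext i j
    have h1 := congrFun (heig i) j
    simp only [mulVec, dotProduct, Pi.smul_apply, smul_eq_mul] at h1
    rw [Matrix.diagonal_mul, Matrix.mul_apply]
    simp only [hUdef, Matrix.of_apply]
    rw [← h1]
    apply Finset.sum_congr rfl
    intro k _
    rw [hH.apply j k, mul_comm]
  -- trace H P = ∑ lam j * s j
  have htr : (H * P).trace = ∑ j, lam j * s j := by
    have h1 : (H * P).trace = (U * (H * P) * Uᵀ).trace := by
      rw [Matrix.trace_mul_cycle, ← Matrix.mul_assoc, hUtU, Matrix.one_mul]
    have h2 : U * (H * P) * Uᵀ = Matrix.diagonal lam * (U * P * Uᵀ) := by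
      rw [← Matrix.mul_assoc, hUH]
      noncomm_ring
    rw [h1, h2]
    simp only [Matrix.trace, Matrix.diag, Matrix.diagonal_mul]
    exact Finset.sum_congr rfl fun j _ => by rw [hsd j]
  -- bounds on s
  have hs0 : ∀ j, 0 ≤ s j := by
    intro j
    have := hPpsd.dotProduct_mulVec_nonneg (φ j)
    rw [hs j]
    simpa using this
  have hs1 : ∀ j, s j ≤ 1 := by
    intro j
    have h := hIPpsd.dotProduct_mulVec_nonneg (φ j)
    have hd : φ j ⬝ᵥ φ j = 1 := by simpa using horth j j
    have hst : star (φ j) = φ j := by funext k; simp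
    rw [Matrix.sub_mulVec, Matrix.one_mulVec, dotProduct_sub, hst, hd, ← hs j] at h
    linarith
  -- the filter set
  set T : Finset (Fin n) := Finset.univ.filter (fun j : Fin n => (j : ℕ) < N) with hT
  have hcard : T.card = N := by
    have : T = Finset.Iio ⟨N, hNn⟩ := by
      ext j; simp [hT, Fin.lt_def]
    rw [this, Fin.card_Iio]
  set a : ℝ := lam ⟨N - 1, by omega⟩
  set b : ℝ := lam ⟨N, hNn⟩
  -- pointwise eigenvalue bounds
  have hlamT : ∀ j ∈ T, lam j ≤ a := by
    intro j hj
    apply hmono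
    have : (j : ℕ) < N := by simpa [hT] using hj
    exact Fin.mk_le_mk.mpr (by omega) |>.trans_eq rfl |>.trans_eq rfl |>.trans_eq rfl
      |> fun h => h
  have hlamTc : ∀ j ∈ Tᶜ, b ≤ lam j := by
    intro j hj
    apply hmono
    have : ¬ ((j : ℕ) < N) := by simpa [hT] using hj
    exact Fin.mk_le_mk.mpr (by omega) |> fun h => h
  -- split sums
  have hsplit : ∑ j, lam j * s j = ∑ j ∈ T, lam j * s j + ∑ j ∈ Tᶜ, lam j * s j :=
    (Finset.sum_add_sum_compl T _).symm
  have hbound1 : ∑ j ∈ T, a * (s j - 1) ≤ ∑ j ∈ T, lam j * s j - ∑ j ∈ T, lam j := by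
    rw [← Finset.sum_sub_distrib]
    apply Finset.sum_le_sum
    intro j hj
    have h1 : lam j * s j - lam j = lam j * (s j - 1) := by ring
    rw [h1]
    exact mul_le_mul_of_nonpos_right (hlamT j hj) (by linarith [hs1 j])
  have hbound2 : ∑ j ∈ Tᶜ, b * s j ≤ ∑ j ∈ Tᶜ, lam j * s j := by
    apply Finset.sum_le_sum
    intro j hj
    exact mul_le_mul_of_nonneg_right (hlamTc j hj) (hs0 j)
  -- sum over complement
  have hcomp : ∑ j ∈ Tᶜ, s j = (N : ℝ) - ∑ j ∈ T, s j := by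
    have := Finset.sum_add_sum_compl T s
    rw [hsum] at this
    linarith
  have hTsum : ∑ j ∈ T, (1 - s j) = (N : ℝ) - ∑ j ∈ T, s j := by
    rw [Finset.sum_sub_distrib, Finset.sum_const, hcard]
    simp
  rw [ge_iff_le, htr, hsplit, hTsum]
  have e1 : ∑ j ∈ T, a * (s j - 1) = a * (∑ j ∈ T, s j - N) := by
    simp only [mul_sub, mul_one, Finset.sum_sub_distrib, Finset.sum_const,
      nsmul_eq_mul, hcard, Finset.mul_sum]
    ring
  have e2 : ∑ j ∈ Tᶜ, b * s j = b * ((N : ℝ) - ∑ j ∈ T, s j) := by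
    rw [← hcomp, Finset.mul_sum]
  nlinarith [hbound1, hbound2, e1, e2]
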